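/- Let μ be a probability measure on ℝ^n, U ⊆ ℝ^m open, θ₀ ∈ U, and g : ℝ^m × ℝ^n → ℝ^d such that for μ-almost every z the map θ ↦ g(θ, z) is differentiable on U. Let q : ℝ^m → ℝ^d → ℝ be a jointly C¹ family of strictly positive probability densities such that for every θ ∈ U, q(θ, ·) is a density of the pushforward of μ under g(θ, ·) (i.e. ∫ h(g(θ, z)) dμ(z) = ∫ h(x) q(θ, x) dx for every bounded measurable h), and let p : ℝ^d → ℝ be a strictly positive C¹ probability density. Assume KL(q(θ,·)‖p) = ∫ q(θ, x) log(q(θ, x)/p(x)) dx is finite for θ in a neighborhood of θ₀ and that the θ-derivatives of the integrands z ↦ log q(θ, g(θ, z)) − log p(g(θ, z)) are dominated, uniformly in θ near θ₀, by a μ-integrable function. Then θ ↦ KL(q(θ,·)‖p) is differentiable at θ₀ with gradient ∇_θ KL(q(θ,·)‖p)|_{θ₀} = ∫ [ ∇_θ log q(θ, x)|_{θ=θ₀, x=g(θ₀,z)} + (∇_x log q(θ₀, ·) − ∇_x log p)(g(θ₀, z))^⊤ ∘ ∇_θ g(θ₀, z) ] dμ(z). -/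

import Mathlib

open MeasureTheory Real
open Filter Topology Set



lemma repKL_aux {n d : ℕ} (μ : Measure (EuclideanSpace ℝ (Fin n))) [IsProbabilityMeasure μ]
    (G : EuclideanSpace ℝ (Fin n) → EuclideanSpace ℝ (Fin d)) (hG : Measurable G)
    (φ : EuclideanSpace ℝ (Fin d) → ℝ) (hφ : Continuous φ)
    (qd : EuclideanSpace ℝ (Fin d) → ℝ) (hqd : ∀ x, 0 ≤ qd x) (hqd_cont : Continuous qd)
    (hpush : ∀ h : EuclideanSpace ℝ (Fin d) → ℝ, Measurable h → (∃ C, ∀ x, |h x| ≤ C) →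
      ∫ z, h (G z) ∂μ = ∫ x, h x * qd x)
    (hint : Integrable (fun x => φ x * qd x)) :
    Integrable (fun z => φ (G z)) μ ∧ ∫ z, φ (G z) ∂μ = ∫ x, φ x * qd x := by
  have meas : AEStronglyMeasurable (fun z => φ (G z)) μ :=
    (hφ.measurable.comp hG).aestronglyMeasurable
  have habs : Integrable (fun x => |φ x| * qd x) := by
    have := hint.abs
    simpa [abs_mul, abs_of_nonneg (hqd _)] using this
  set K := ∫ x, |φ x| * qd x with hK
  -- truncations of |φ|
  have uN_cont : ∀ N : ℕ, Continuous (fun x => min |φ x| (N : ℝ)) :=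
    fun N => hφ.abs.min continuous_const
  have uN_push : ∀ N : ℕ, ∫ z, min |φ (G z)| (N : ℝ) ∂μ = ∫ x, min |φ x| (N : ℝ) * qd x := by
    intro N
    exact hpush _ (uN_cont N).measurable ⟨N, fun x => by
      rw [abs_of_nonneg (le_min (abs_nonneg _) (Nat.cast_nonneg N))]
      exact min_le_right _ _⟩
  have uN_int_z : ∀ N : ℕ, Integrable (fun z => min |φ (G z)| (N : ℝ)) μ := by
    intro N
    refine (integrable_const (N : ℝ)).mono' (((uN_cont N).measurable.comp hG).aestronglyMeasurable) ?_
    filter_upwards with z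
    rw [Real.norm_eq_abs, abs_of_nonneg (le_min (abs_nonneg _) (Nat.cast_nonneg N))]
    exact min_le_right _ _
  have uN_int_x : ∀ N : ℕ, Integrable (fun x => min |φ x| (N : ℝ) * qd x) := by
    intro N
    refine habs.mono' (((uN_cont N).mul hqd_cont).aestronglyMeasurable) ?_
    filter_upwards with x
    rw [Real.norm_eq_abs, abs_mul, abs_of_nonneg (hqd x),
      abs_of_nonneg (le_min (abs_nonneg _) (Nat.cast_nonneg N))]
    exact mul_le_mul_of_nonneg_right (min_le_left _ _) (hqd x)
  have uN_le : ∀ N : ℕ, ∫ x, min |φ x| (N : ℝ) * qd x ≤ K := by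
    intro N
    exact integral_mono (uN_int_x N) habs
      (fun x => mul_le_mul_of_nonneg_right (min_le_left _ _) (hqd x))
  have intφG : Integrable (fun z => φ (G z)) μ := by
    refine ⟨meas, ?_⟩
    rw [hasFiniteIntegral_iff_norm]
    have h1 : ∀ z, ENNReal.ofReal ‖φ (G z)‖ = ⨆ N : ℕ, ENNReal.ofReal (min |φ (G z)| (N : ℝ)) := by
      intro z
      rw [Real.norm_eq_abs]
      refine le_antisymm ?_ (iSup_le fun N => ENNReal.ofReal_le_ofReal (min_le_left _ _))
      refine le_iSup_of_le ⌈|φ (G z)|⌉₊ ?_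
      rw [min_eq_left (Nat.le_ceil _)]
    calc ∫⁻ z, ENNReal.ofReal ‖φ (G z)‖ ∂μ
        = ∫⁻ z, ⨆ N : ℕ, ENNReal.ofReal (min |φ (G z)| (N : ℝ)) ∂μ := by
          exact lintegral_congr h1
      _ = ⨆ N : ℕ, ∫⁻ z, ENNReal.ofReal (min |φ (G z)| (N : ℝ)) ∂μ := by
          refine lintegral_iSup (fun N => ?_) ?_
          · exact ENNReal.measurable_ofReal.comp ((uN_cont N).measurable.comp hG)
          · intro N M hNM z
            exact ENNReal.ofReal_le_ofReal (min_le_min le_rfl (Nat.cast_le.2 hNM))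
      _ ≤ ENNReal.ofReal K := by
          refine iSup_le fun N => ?_
          rw [← ofReal_integral_eq_lintegral_ofReal (uN_int_z N)
            (Filter.Eventually.of_forall fun z => le_min (abs_nonneg _) (Nat.cast_nonneg N))]
          exact ENNReal.ofReal_le_ofReal ((uN_push N).le.trans (uN_le N))
      _ < ⊤ := ENNReal.ofReal_lt_top
  refine ⟨intφG, ?_⟩
  -- clamped versions of φ
  set hc : ℕ → EuclideanSpace ℝ (Fin d) → ℝ := fun N x => max (-(N : ℝ)) (min (φ x) N) with hhc
  have hc_cont : ∀ N, Continuous (hc N) := fun N => continuous_const.max (hφ.min continuous_const)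
  have hc_bound : ∀ N x, -|φ x| ≤ hc N x ∧ hc N x ≤ |φ x| := by
    intro N x
    constructor
    · exact le_max_of_le_right (le_min (neg_abs_le _) (le_trans (neg_nonpos.2 (abs_nonneg _)) (Nat.cast_nonneg N)))
    · exact max_le (le_trans (neg_nonpos.2 (Nat.cast_nonneg N)) (abs_nonneg _))
        (le_trans (min_le_left _ _) (le_abs_self _))
  have hc_abs : ∀ N x, |hc N x| ≤ |φ x| := fun N x =>
    abs_le.2 ⟨(hc_bound N x).1, (hc_bound N x).2⟩
  have hc_absN : ∀ N x, |hc N x| ≤ (N : ℝ) := by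
    intro N x
    rw [abs_le]
    constructor
    · exact le_max_left _ _
    · exact max_le (le_trans (neg_nonpos.2 (Nat.cast_nonneg N)) (Nat.cast_nonneg N)) (min_le_right _ _)
  have hc_tendsto : ∀ x, Tendsto (fun N : ℕ => hc N x) atTop (𝓝 (φ x)) := by
    intro x
    refine tendsto_atTop_of_eventually_const (i₀ := ⌈|φ x|⌉₊) fun N hN => ?_
    have h1 : |φ x| ≤ (N : ℝ) := le_trans (Nat.le_ceil _) (Nat.cast_le.2 hN)
    rw [hhc]
    simp only
    rw [min_eq_left (le_trans (le_abs_self _) h1),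
      max_eq_right (le_trans (neg_le_neg h1) (neg_abs_le _))]
  have hc_push : ∀ N : ℕ, ∫ z, hc N (G z) ∂μ = ∫ x, hc N x * qd x :=
    fun N => hpush _ (hc_cont N).measurable ⟨N, hc_absN N⟩
  have tend_left : Tendsto (fun N : ℕ => ∫ z, hc N (G z) ∂μ) atTop (𝓝 (∫ z, φ (G z) ∂μ)) := by
    refine tendsto_integral_of_dominated_convergence (fun z => |φ (G z)|)
      (fun N => ((hc_cont N).measurable.comp hG).aestronglyMeasurable) intφG.abs
      (fun N => Filter.Eventually.of_forall fun z => by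
        rw [Real.norm_eq_abs]; exact hc_abs N _)
      (Filter.Eventually.of_forall fun z => hc_tendsto _)
  have tend_right : Tendsto (fun N : ℕ => ∫ x, hc N x * qd x) atTop (𝓝 (∫ x, φ x * qd x)) := by
    refine tendsto_integral_of_dominated_convergence (fun x => |φ x| * qd x)
      (fun N => ((hc_cont N).mul hqd_cont).aestronglyMeasurable) habs
      (fun N => Filter.Eventually.of_forall fun x => by
        rw [Real.norm_eq_abs, abs_mul, abs_of_nonneg (hqd x)]
        exact mul_le_mul_of_nonneg_right (hc_abs N x) (hqd x))
      (Filter.Eventually.of_forall fun x => (hc_tendsto x).mul_const _)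
  have : Tendsto (fun N : ℕ => ∫ z, hc N (G z) ∂μ) atTop (𝓝 (∫ x, φ x * qd x)) := by
    simpa only [hc_push] using tend_right
  exact tendsto_nhds_unique tend_left this

lemma clm_decomp {m : ℕ} (T : EuclideanSpace ℝ (Fin m) →L[ℝ] ℝ) :
    T = ∑ i : Fin m, T (EuclideanSpace.single i 1) • (EuclideanSpace.proj i : EuclideanSpace ℝ (Fin m) →L[ℝ] ℝ) := by
  ext v
  have hv : v = ∑ i : Fin m, v i • EuclideanSpace.single i (1 : ℝ) := by
    have := (EuclideanSpace.basisFun (Fin m) ℝ).sum_repr v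
    simp only [EuclideanSpace.basisFun_repr, EuclideanSpace.basisFun_apply] at this
    exact this.symm
  conv_lhs => rw [hv]
  rw [map_sum]
  simp [ContinuousLinearMap.sum_apply, mul_comm]

lemma aestronglyMeasurable_fderiv_param {n m : ℕ}
    (μ : Measure (EuclideanSpace ℝ (Fin n)))
    (F : EuclideanSpace ℝ (Fin m) → EuclideanSpace ℝ (Fin n) → ℝ)
    (θ₀ : EuclideanSpace ℝ (Fin m)) (r : ℝ) (hr : 0 < r)
    (hmeas : ∀ θ ∈ Metric.ball θ₀ r, AEStronglyMeasurable (F θ) μ)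
    (hdiff : ∀ᵐ z ∂μ, DifferentiableAt ℝ (fun θ => F θ z) θ₀) :
    AEStronglyMeasurable (fun z => fderiv ℝ (fun θ => F θ z) θ₀) μ := by
  set K : ℕ := ⌈1 / r⌉₊ + 1 with hKdef
  set c : ℕ → ℝ := fun k => (k : ℝ) + K with hc
  have hcpos : ∀ k, 0 < c k := fun k => by
    have : (0:ℝ) < K := by positivity
    have := Nat.cast_nonneg (α := ℝ) k
    simp only [hc]; positivity
  have hcK : ∀ k, (K : ℝ) ≤ c k := fun k => by
    simp only [hc]; nlinarith [Nat.cast_nonneg (α := ℝ) k]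
  have hKr : 1 / (K : ℝ) < r := by
    rw [div_lt_iff₀ (by positivity)]
    have h1 : (1:ℝ)/r < K := by
      have h2 : (1:ℝ)/r ≤ ⌈1/r⌉₊ := Nat.le_ceil _
      have h3 : (⌈1/r⌉₊ : ℝ) < K := by simp [hKdef]
      linarith
    have h4 := mul_lt_mul_of_pos_right h1 hr
    rw [div_mul_cancel₀ _ hr.ne'] at h4
    linarith [mul_comm (K:ℝ) r]
  have hmem : ∀ k (i : Fin m), θ₀ + (c k)⁻¹ • EuclideanSpace.single i (1:ℝ) ∈ Metric.ball θ₀ r := by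
    intro k i
    rw [Metric.mem_ball, dist_eq_norm]
    have : θ₀ + (c k)⁻¹ • EuclideanSpace.single i (1:ℝ) - θ₀ = (c k)⁻¹ • EuclideanSpace.single i (1:ℝ) := by abel
    rw [this, norm_smul, EuclideanSpace.norm_single]
    simp only [norm_one, mul_one, Real.norm_eq_abs]
    rw [abs_of_nonneg (inv_nonneg.2 (hcpos k).le)]
    calc (c k)⁻¹ ≤ (K : ℝ)⁻¹ := by
          apply inv_anti₀ (by positivity) (hcK k)
      _ < r := by rwa [inv_eq_one_div]
  set L : ℕ → (EuclideanSpace ℝ (Fin n)) → (EuclideanSpace ℝ (Fin m) →L[ℝ] ℝ) :=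
    fun k z => ∑ i : Fin m, (c k • (F (θ₀ + (c k)⁻¹ • EuclideanSpace.single i 1) z - F θ₀ z)) •
      (EuclideanSpace.proj i : EuclideanSpace ℝ (Fin m) →L[ℝ] ℝ) with hL
  have hLmeas : ∀ k, AEStronglyMeasurable (L k) μ := by
    intro k
    have houter : Continuous (fun v : Fin m → ℝ =>
        ∑ i : Fin m, v i • (EuclideanSpace.proj i : EuclideanSpace ℝ (Fin m) →L[ℝ] ℝ)) := by
      apply continuous_finset_sum
      intro i _
      exact (continuous_apply i).smul continuous_const
    have hco : ∀ i : Fin m, AEStronglyMeasurable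
        (fun z => c k • (F (θ₀ + (c k)⁻¹ • EuclideanSpace.single i 1) z - F θ₀ z)) μ :=
      fun i => ((hmeas _ (hmem k i)).sub (hmeas θ₀ (Metric.mem_ball_self hr))).const_smul (c k)
    have hinner : AEStronglyMeasurable (fun z => (fun i : Fin m =>
        c k • (F (θ₀ + (c k)⁻¹ • EuclideanSpace.single i 1) z - F θ₀ z))) μ := by
      refine ⟨fun z => fun i => (hco i).mk _ z, ?_, ?_⟩
      · apply Measurable.stronglyMeasurable
        exact measurable_pi_lambda _ fun i => ((hco i).stronglyMeasurable_mk).measurable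
      · have := ae_all_iff.2 fun i : Fin m => (hco i).ae_eq_mk
        filter_upwards [this] with z hz
        funext i
        exact hz i
    exact houter.comp_aestronglyMeasurable hinner
  refine aestronglyMeasurable_of_tendsto_ae atTop hLmeas ?_
  filter_upwards [hdiff] with z hz
  have hcnorm : Tendsto (fun k : ℕ => ‖c k‖) atTop atTop := by
    have : (fun k : ℕ => ‖c k‖) = fun k : ℕ => (k : ℝ) + K := by
      funext k; rw [Real.norm_eq_abs, abs_of_nonneg (hcpos k).le]
    rw [this]
    exact tendsto_atTop_add_const_right _ _ tendsto_natCast_atTop_atTop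
  have hlim : ∀ i : Fin m, Tendsto (fun k : ℕ =>
      c k • (F (θ₀ + (c k)⁻¹ • EuclideanSpace.single i 1) z - F θ₀ z)) atTop
      (𝓝 (fderiv ℝ (fun θ => F θ z) θ₀ (EuclideanSpace.single i 1))) :=
    fun i => hz.hasFDerivAt.lim (EuclideanSpace.single i 1) hcnorm
  have : Tendsto (fun k => L k z) atTop
      (𝓝 (∑ i : Fin m, (fderiv ℝ (fun θ => F θ z) θ₀ (EuclideanSpace.single i 1)) •
        (EuclideanSpace.proj i : EuclideanSpace ℝ (Fin m) →L[ℝ] ℝ))) := by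
    exact tendsto_finset_sum _ fun i _ => (hlim i).smul_const _
  rwa [← clm_decomp] at this

lemma pair_bound {n m : ℕ} (μ : Measure (EuclideanSpace ℝ (Fin n))) [IsProbabilityMeasure μ]
    (U V : Set (EuclideanSpace ℝ (Fin m))) (hVU : V ⊆ U)
    (F : EuclideanSpace ℝ (Fin m) → EuclideanSpace ℝ (Fin n) → ℝ)
    (B : EuclideanSpace ℝ (Fin n) → ℝ) (hBmeas : AEStronglyMeasurable B μ)
    (hFdiff : ∀ z, ∀ θ ∈ U, DifferentiableAt ℝ (fun θ' => F θ' z) θ)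
    (hFmeas : ∀ θ ∈ U, Measurable (fun z => F θ z))
    (hB : ∀ θ ∈ V, ∀ᵐ z ∂μ, ‖fderiv ℝ (fun θ' => F θ' z) θ‖ ≤ B z)
    (a b : EuclideanSpace ℝ (Fin m))
    (hseg : ∀ t ∈ Set.Icc (0:ℝ) 2, a + t • (b - a) ∈ V) :
    ∀ᵐ z ∂μ, |F b z - F a z| ≤ B z * ‖b - a‖ := by
  classical
  set γ : ℝ → EuclideanSpace ℝ (Fin m) := fun t => a + t • (b - a) with hγdef
  have hγcont : Continuous γ := by continuity
  set pj : ℝ → ℝ := fun t => max 0 (min t 2) with hpjdef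
  have hpjcont : Continuous pj := continuous_const.max (continuous_id.min continuous_const)
  have hpjmem : ∀ t, pj t ∈ Icc (0:ℝ) 2 := fun t =>
    ⟨le_max_left _ _, max_le (by norm_num) (min_le_right _ _)⟩
  have hpjid : ∀ t ∈ Icc (0:ℝ) 2, pj t = t := fun t ht => by
    simp only [hpjdef]; rw [min_eq_left ht.2, max_eq_right ht.1]
  have hγV : ∀ t, γ (pj t) ∈ V := fun t => hseg _ (hpjmem t)
  have hγU : ∀ t, γ (pj t) ∈ U := fun t => hVU (hγV t)
  -- the joint function along the (projected) segment
  set G : ℝ → EuclideanSpace ℝ (Fin n) → ℝ := fun t z => F (γ (pj t)) z with hGdef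
  have hGcont : ∀ z, Continuous fun t => G t z := by
    intro z
    rw [continuous_iff_continuousAt]
    intro t
    have h1 : ContinuousAt (fun θ => F θ z) (γ (pj t)) := (hFdiff z _ (hγU t)).continuousAt
    have h2 : ContinuousAt (fun s => γ (pj s)) t := (hγcont.comp hpjcont).continuousAt
    exact ContinuousAt.comp (g := fun θ => F θ z) (f := fun s => γ (pj s)) (x := t) h1 h2
  have hGmeas : ∀ t, Measurable (G t) := fun t => hFmeas _ (hγU t)
  have hGjoint : Measurable (Function.uncurry G) :=
    measurable_uncurry_of_continuous_of_measurable hGcont hGmeas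
  -- difference quotients, jointly measurable
  set H : ℕ → EuclideanSpace ℝ (Fin n) × ℝ → ℝ :=
    fun k p => (k : ℝ) • (G (p.2 + (k : ℝ)⁻¹) p.1 - G p.2 p.1) with hHdef
  have hHmeas : ∀ k, Measurable (H k) := by
    intro k
    simp only [hHdef, smul_eq_mul]
    apply Measurable.const_mul
    exact (hGjoint.comp ((measurable_snd.add_const _).prodMk measurable_fst)).sub
      (hGjoint.comp (measurable_snd.prodMk measurable_fst))
  -- the directional derivative along the segment
  set DD : EuclideanSpace ℝ (Fin n) × ℝ → ℝ :=
    fun p => (fderiv ℝ (fun θ => F θ p.1) (γ p.2)) (b - a) with hDDdef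
  set ν : Measure ℝ := volume.restrict (Icc (0:ℝ) 1) with hνdef
  set ρ : Measure (EuclideanSpace ℝ (Fin n) × ℝ) := μ.prod ν with hρdef
  have hIcc12 : Icc (0:ℝ) 1 ⊆ Icc (0:ℝ) 2 := Icc_subset_Icc le_rfl one_le_two
  have hψderiv : ∀ z, ∀ t ∈ Icc (0:ℝ) 1, HasDerivAt (fun s => F (γ s) z) (DD (z, t)) t := by
    intro z t ht
    have hγd : HasDerivAt γ (b - a) t := by
      have : HasDerivAt (fun s : ℝ => s • (b - a)) ((1:ℝ) • (b - a)) t :=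
        (hasDerivAt_id t).smul_const (b - a)
      rw [one_smul] at this
      exact this.const_add a
    have hFd : HasFDerivAt (fun θ => F θ z) (fderiv ℝ (fun θ => F θ z) (γ t)) (γ t) := by
      have h1 : γ t ∈ U := by
        have := hseg t (hIcc12 ht); exact hVU this
      exact (hFdiff z _ h1).hasFDerivAt
    exact hFd.comp_hasDerivAt t hγd
  have hHtendsto : ∀ z, ∀ t ∈ Icc (0:ℝ) 1,
      Tendsto (fun k : ℕ => H k (z, t)) atTop (𝓝 (DD (z, t))) := by
    intro z t ht
    have hψ := hψderiv z t ht
    have hcnorm : Tendsto (fun k : ℕ => ‖(k:ℝ)‖) atTop atTop := by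
      have : (fun k : ℕ => ‖(k:ℝ)‖) = fun k : ℕ => (k : ℝ) := by
        funext k; rw [Real.norm_eq_abs, abs_of_nonneg (Nat.cast_nonneg k)]
      rw [this]; exact tendsto_natCast_atTop_atTop
    have hlim := hψ.hasFDerivAt.lim (1:ℝ) hcnorm
    simp only [smul_eq_mul, mul_one, ContinuousLinearMap.smulRight_apply,
      ContinuousLinearMap.one_apply, one_smul] at hlim
    have heq : ∀ k : ℕ, H k (z, t) = (k:ℝ) • ((fun s => F (γ s) z) (t + ((k:ℝ))⁻¹ * 1)
        - (fun s => F (γ s) z) t) := by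
      intro k
      have h1 : pj t = t := hpjid t (hIcc12 ht)
      have h2 : pj (t + (k:ℝ)⁻¹) = t + (k:ℝ)⁻¹ := by
        apply hpjid
        rcases Nat.eq_zero_or_pos k with hk | hk
        · subst hk; simp; exact ⟨ht.1, ht.2.trans one_le_two⟩
        · have hkinv : (0:ℝ) < (k:ℝ)⁻¹ := by positivity
          have hkinv1 : (k:ℝ)⁻¹ ≤ 1 := by
            rw [inv_le_one_iff₀]; right; exact_mod_cast hk
          constructor
          · linarith [ht.1]
          · linarith [ht.2]
      simp only [hHdef, hGdef, h1, h2, mul_one]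
    rw [show (fun k : ℕ => H k (z, t)) = fun k : ℕ => (k:ℝ) • ((fun s => F (γ s) z) (t + ((k:ℝ))⁻¹ * 1) - (fun s => F (γ s) z) t) from funext heq]
    simpa using hlim
  have hae_t : ∀ᵐ p : EuclideanSpace ℝ (Fin n) × ℝ ∂ρ, p.2 ∈ Icc (0:ℝ) 1 := by
    rw [ae_iff]
    have : {p : EuclideanSpace ℝ (Fin n) × ℝ | ¬ p.2 ∈ Icc (0:ℝ) 1}
        = (univ : Set (EuclideanSpace ℝ (Fin n))) ×ˢ (Icc (0:ℝ) 1)ᶜ := by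
      ext p; simp [Set.mem_prod]
    rw [this, hρdef, Measure.prod_prod, hνdef,
      Measure.restrict_apply (measurableSet_Icc.compl)]
    simp
  have hDDmeas : AEStronglyMeasurable DD ρ := by
    refine aestronglyMeasurable_of_tendsto_ae atTop
      (fun k => (hHmeas k).aestronglyMeasurable) ?_
    filter_upwards [hae_t] with p hp
    exact hHtendsto p.1 p.2 hp
  haveI : IsFiniteMeasure ν := by
    constructor
    rw [hνdef, Measure.restrict_apply_univ, Real.volume_Icc]
    simp
  have hνne : ν ≠ 0 := by
    intro h0
    have : ν univ = 0 := by rw [h0]; simp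
    rw [hνdef, Measure.restrict_apply_univ, Real.volume_Icc] at this
    simp at this
  -- measurable representatives
  have hDhatSM : StronglyMeasurable (hDDmeas.mk DD) := hDDmeas.stronglyMeasurable_mk
  have hDeq : DD =ᵐ[ρ] hDDmeas.mk DD := hDDmeas.ae_eq_mk
  set Dhat := hDDmeas.mk DD with hDhatdef
  have hBhatSM : StronglyMeasurable (hBmeas.mk B) := hBmeas.stronglyMeasurable_mk
  have hBeq : B =ᵐ[μ] hBmeas.mk B := hBmeas.ae_eq_mk
  set Bhat := hBmeas.mk B with hBhatdef
  have hBprod : ∀ᵐ p : EuclideanSpace ℝ (Fin n) × ℝ ∂ρ, B p.1 = Bhat p.1 := by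
    rw [ae_iff]
    have hsub : {p : EuclideanSpace ℝ (Fin n) × ℝ | ¬ B p.1 = Bhat p.1}
        ⊆ (toMeasurable μ {z | ¬ B z = Bhat z}) ×ˢ (univ : Set ℝ) := by
      intro p hp
      exact ⟨subset_toMeasurable _ _ hp, mem_univ _⟩
    refine measure_mono_null hsub ?_
    rw [hρdef, Measure.prod_prod, measure_toMeasurable]
    have h0 : μ {z | ¬ B z = Bhat z} = 0 := ae_iff.1 hBeq
    rw [h0, zero_mul]
  have hslice_eq : ∀ᵐ t ∂ν, ∀ᵐ z ∂μ, DD (z, t) = Dhat (z, t) := by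
    set E := toMeasurable ρ {p | ¬ DD p = Dhat p} with hEdef
    have hEmeas : MeasurableSet E := measurableSet_toMeasurable _ _
    have hEnull : ρ E = 0 := by
      rw [hEdef, measure_toMeasurable]
      exact ae_iff.1 hDeq
    have h2 : ∫⁻ t, μ ((fun z => (z, t)) ⁻¹' E) ∂ν = 0 := by
      rw [← Measure.prod_apply_symm hEmeas, ← hρdef]
      exact hEnull
    have hm : Measurable fun t => μ ((fun z => (z, t)) ⁻¹' E) :=
      measurable_measure_prodMk_right hEmeas
    have h3 := (lintegral_eq_zero_iff hm).1 h2
    filter_upwards [h3] with t ht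
    have h4 : ∀ᵐ z ∂μ, (z, t) ∉ E := by
      rw [ae_iff]
      refine measure_mono_null ?_ ht
      intro z hz
      simpa using hz
    filter_upwards [h4] with z hz
    by_contra hne
    exact hz (subset_toMeasurable _ _ hne)
  have hslice_bound : ∀ t ∈ Icc (0:ℝ) 1, ∀ᵐ z ∂μ, |DD (z, t)| ≤ B z * ‖b - a‖ := by
    intro t ht
    filter_upwards [hB (γ t) (hseg t (hIcc12 ht))] with z hz
    calc |DD (z, t)| ≤ ‖fderiv ℝ (fun θ => F θ z) (γ t)‖ * ‖b - a‖ := by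
          rw [← Real.norm_eq_abs]
          exact (fderiv ℝ (fun θ => F θ z) (γ t)).le_opNorm (b - a)
      _ ≤ B z * ‖b - a‖ := mul_le_mul_of_nonneg_right hz (norm_nonneg _)
  have hW : ∀ᵐ p : EuclideanSpace ℝ (Fin n) × ℝ ∂ρ, |DD p| ≤ B p.1 * ‖b - a‖ := by
    set W := {p : EuclideanSpace ℝ (Fin n) × ℝ | Bhat p.1 * ‖b - a‖ < |Dhat p|} with hWdef
    have hWmeas : MeasurableSet W := by
      apply measurableSet_lt
      · exact (hBhatSM.measurable.comp measurable_fst).mul_const _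
      · exact hDhatSM.measurable.abs
    have hWnull : ρ W = 0 := by
      rw [hρdef, Measure.prod_apply_symm hWmeas]
      have hz0 : ∀ᵐ t ∂ν, μ ((fun z => (z, t)) ⁻¹' W) = 0 := by
        have htmem : ∀ᵐ t ∂ν, t ∈ Icc (0:ℝ) 1 := by
          rw [hνdef]
          exact ae_restrict_mem measurableSet_Icc
        filter_upwards [htmem, hslice_eq] with t ht hteq
        have hnot : ∀ᵐ z ∂μ, (z, t) ∉ W := by
          filter_upwards [hslice_bound t ht, hteq, hBeq] with z h1 h2 h3
          simp only [hWdef, mem_setOf_eq, not_lt]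
          rw [← h2, ← h3]
          exact h1
        have h5 := ae_iff.1 hnot
        exact (by simpa [not_not] using h5 : μ {a | (a, t) ∈ W} = 0)
      calc ∫⁻ t, μ ((fun z => (z, t)) ⁻¹' W) ∂ν = ∫⁻ t, 0 ∂ν := lintegral_congr_ae hz0
        _ = 0 := lintegral_zero
    have h1 : ∀ᵐ p : EuclideanSpace ℝ (Fin n) × ℝ ∂ρ, p ∉ W := by
      rw [ae_iff]
      simpa using hWnull
    filter_upwards [h1, hDeq, hBprod] with p hp hD hBp
    simp only [hWdef, mem_setOf_eq, not_lt] at hp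
    rw [hD, hBp]
    exact hp
  have hzslices := Measure.ae_ae_of_ae_prod hW
  have hzmeas : ∀ᵐ z ∂μ, AEStronglyMeasurable (fun t => DD (z, t)) ν := by
    filter_upwards [Measure.ae_ae_of_ae_prod hDeq] with z hz
    exact ⟨fun t => Dhat (z, t), hDhatSM.comp_measurable measurable_prodMk_left, hz⟩
  filter_upwards [hzslices, hzmeas] with z hz1 hz2
  have hBz_nonneg : 0 ≤ B z * ‖b - a‖ := by
    by_contra hneg
    push_neg at hneg
    have hfalse : ∀ᵐ t ∂ν, False := by
      filter_upwards [hz1] with t ht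
      exact absurd (lt_of_le_of_lt ht hneg) (not_lt.2 (abs_nonneg _))
    haveI : (ae ν).NeBot := ae_neBot.2 hνne
    exact hfalse.exists.choose_spec
  have hIoc : ν.restrict (Ioc (0:ℝ) 1) = volume.restrict (Ioc (0:ℝ) 1) := by
    rw [hνdef, Measure.restrict_restrict measurableSet_Ioc,
      inter_eq_left.2 Ioc_subset_Icc_self]
  have hint : Integrable (fun t => DD (z, t)) ν := by
    refine Integrable.mono' (integrable_const (B z * ‖b - a‖)) hz2 ?_
    filter_upwards [hz1] with t ht
    rwa [Real.norm_eq_abs]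
  have hII : IntervalIntegrable (fun t => DD (z, t)) volume 0 1 := by
    rw [intervalIntegrable_iff, uIoc_of_le zero_le_one]
    rw [IntegrableOn, ← hIoc]
    exact hint.restrict
  have hFTC := intervalIntegral.integral_eq_sub_of_hasDerivAt
    (f := fun s => F (γ s) z) (f' := fun t => DD (z, t))
    (fun t ht => hψderiv z t (by rwa [uIcc_of_le zero_le_one] at ht)) hII
  have hγ0 : γ 0 = a := by simp [hγdef]
  have hγ1 : γ 1 = b := by simp [hγdef]
  have hbnd : ‖∫ t in (0:ℝ)..1, DD (z, t)‖ ≤ B z * ‖b - a‖ := by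
    have hae : ∀ᵐ t ∂volume.restrict (Set.uIoc (0:ℝ) 1), ‖DD (z, t)‖ ≤ B z * ‖b - a‖ := by
      rw [uIoc_of_le (zero_le_one (α := ℝ)), ← hIoc]
      refine ae_restrict_of_ae ?_
      filter_upwards [hz1] with t ht
      rwa [Real.norm_eq_abs]
    have := intervalIntegral.norm_integral_le_of_norm_le zero_le_one
      ((ae_restrict_iff' measurableSet_Ioc).1 (by rwa [uIoc_of_le (zero_le_one (α := ℝ))] at hae))
      (intervalIntegrable_const (c := B z * ‖b - a‖))
    rw [intervalIntegral.integral_const, sub_zero, one_smul] at this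
    exact this
  have heval : (fun s => F (γ s) z) 1 - (fun s => F (γ s) z) 0 = F b z - F a z := by
    show F (γ 1) z - F (γ 0) z = F b z - F a z
    rw [hγ1, hγ0]
  rw [hFTC, heval] at hbnd
  rwa [Real.norm_eq_abs] at hbnd
lemma lip_of_dom {n m : ℕ} (μ : Measure (EuclideanSpace ℝ (Fin n))) [IsProbabilityMeasure μ]
    (U V : Set (EuclideanSpace ℝ (Fin m))) (hVU : V ⊆ U)
    (F : EuclideanSpace ℝ (Fin m) → EuclideanSpace ℝ (Fin n) → ℝ)
    (B : EuclideanSpace ℝ (Fin n) → ℝ) (hBmeas : AEStronglyMeasurable B μ)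
    (hFdiff : ∀ z, ∀ θ ∈ U, DifferentiableAt ℝ (fun θ' => F θ' z) θ)
    (hFmeas : ∀ θ ∈ U, Measurable (fun z => F θ z))
    (hB : ∀ θ ∈ V, ∀ᵐ z ∂μ, ‖fderiv ℝ (fun θ' => F θ' z) θ‖ ≤ B z)
    (θ₀ : EuclideanSpace ℝ (Fin m)) (r : ℝ) (hr : 0 < r)
    (hball : ∀ θ, dist θ θ₀ ≤ 10 * r → θ ∈ V) :
    ∀ᵐ z ∂μ, LipschitzOnWith (Real.nnabs (B z)) (fun θ => F θ z) (Metric.ball θ₀ r) := by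
  have hballU : Metric.ball θ₀ r ⊆ U := fun θ hθ =>
    hVU (hball θ (by rw [Metric.mem_ball] at hθ; nlinarith))
  have hseg : ∀ a ∈ Metric.closedBall θ₀ (2 * r), ∀ b ∈ Metric.closedBall θ₀ (2 * r),
      ∀ t ∈ Icc (0:ℝ) 2, a + t • (b - a) ∈ V := by
    intro a ha b hb t ht
    rw [Metric.mem_closedBall, dist_eq_norm] at ha hb
    apply hball
    rw [dist_eq_norm]
    have hba : ‖b - a‖ ≤ 4 * r := by
      have : b - a = (b - θ₀) - (a - θ₀) := by abel
      rw [this]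
      calc ‖(b - θ₀) - (a - θ₀)‖ ≤ ‖b - θ₀‖ + ‖a - θ₀‖ := norm_sub_le _ _
        _ ≤ 4 * r := by linarith
    have h1 : a + t • (b - a) - θ₀ = (a - θ₀) + t • (b - a) := by abel
    rw [h1]
    calc ‖(a - θ₀) + t • (b - a)‖ ≤ ‖a - θ₀‖ + ‖t • (b - a)‖ := norm_add_le _ _
      _ = ‖a - θ₀‖ + |t| * ‖b - a‖ := by rw [norm_smul, Real.norm_eq_abs]
      _ ≤ 2 * r + 2 * (4 * r) := by
          have h2 : |t| ≤ 2 := abs_le.2 ⟨by linarith [ht.1], ht.2⟩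
          have h3 : |t| * ‖b - a‖ ≤ 2 * (4 * r) := by
            apply mul_le_mul h2 hba (norm_nonneg _) (by norm_num)
          linarith
      _ ≤ 10 * r := by linarith
  obtain ⟨D0, hD0c, hD0d⟩ : ∃ D0 : Set (EuclideanSpace ℝ (Fin m)), D0.Countable ∧
      Metric.ball θ₀ r ⊆ closure D0 :=
    TopologicalSpace.IsSeparable.of_separableSpace (Metric.ball θ₀ r)
  set D : Set (EuclideanSpace ℝ (Fin m)) := D0 ∩ Metric.closedBall θ₀ (2 * r) with hDdef
  have hDc : D.Countable := hD0c.mono inter_subset_left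
  have hpair : ∀ a ∈ D, ∀ b ∈ D, ∀ᵐ z ∂μ, |F b z - F a z| ≤ B z * ‖b - a‖ := by
    intro a ha b hb
    exact pair_bound μ U V hVU F B hBmeas hFdiff hFmeas hB a b (hseg a ha.2 b hb.2)
  have hcomb : ∀ᵐ z ∂μ, ∀ a ∈ D, ∀ b ∈ D, |F b z - F a z| ≤ B z * ‖b - a‖ :=
    (ae_ball_iff hDc).2 fun a ha => (ae_ball_iff hDc).2 fun b hb => hpair a ha b hb
  filter_upwards [hcomb] with z hz
  have hcont : ∀ θ ∈ Metric.ball θ₀ r, ContinuousAt (fun θ' => F θ' z) θ :=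
    fun θ hθ => (hFdiff z θ (hballU hθ)).continuousAt
  apply LipschitzOnWith.of_dist_le_mul
  intro x hx y hy
  -- approximate x and y by elements of D
  obtain ⟨u, hu, hulim⟩ := mem_closure_iff_seq_limit.1 (hD0d hx)
  obtain ⟨v, hv, hvlim⟩ := mem_closure_iff_seq_limit.1 (hD0d hy)
  have huD : ∀ᶠ k in atTop, u k ∈ D := by
    have : ∀ᶠ k in atTop, u k ∈ Metric.closedBall θ₀ (2 * r) := by
      have hx2 : dist x θ₀ < 2 * r := lt_of_lt_of_le (Metric.mem_ball.1 hx) (by linarith)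
      have hdt : Tendsto (fun k => dist (u k) θ₀) atTop (𝓝 (dist x θ₀)) :=
        hulim.dist tendsto_const_nhds
      filter_upwards [hdt.eventually_lt_const hx2] with k hk
      exact Metric.mem_closedBall.2 hk.le
    filter_upwards [this] with k hk
    exact ⟨hu k, hk⟩
  have hvD : ∀ᶠ k in atTop, v k ∈ D := by
    have : ∀ᶠ k in atTop, v k ∈ Metric.closedBall θ₀ (2 * r) := by
      have hy2 : dist y θ₀ < 2 * r := lt_of_lt_of_le (Metric.mem_ball.1 hy) (by linarith)
      have hdt : Tendsto (fun k => dist (v k) θ₀) atTop (𝓝 (dist y θ₀)) :=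
        hvlim.dist tendsto_const_nhds
      filter_upwards [hdt.eventually_lt_const hy2] with k hk
      exact Metric.mem_closedBall.2 hk.le
    filter_upwards [this] with k hk
    exact ⟨hv k, hk⟩
  have hFu : Tendsto (fun k => F (v k) z - F (u k) z) atTop (𝓝 (F y z - F x z)) := by
    have h1 : Tendsto (fun k => F (u k) z) atTop (𝓝 (F x z)) :=
      (hcont x hx).tendsto.comp hulim
    have h2 : Tendsto (fun k => F (v k) z) atTop (𝓝 (F y z)) :=
      (hcont y hy).tendsto.comp hvlim
    exact h2.sub h1
  have hnorm : Tendsto (fun k => B z * ‖v k - u k‖) atTop (𝓝 (B z * ‖y - x‖)) := by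
    have : Tendsto (fun k => v k - u k) atTop (𝓝 (y - x)) := hvlim.sub hulim
    exact (this.norm.const_mul (B z))
  have hle : |F y z - F x z| ≤ B z * ‖y - x‖ := by
    refine le_of_tendsto_of_tendsto hFu.abs hnorm ?_
    filter_upwards [huD, hvD] with k hk1 hk2
    exact hz (u k) hk1 (v k) hk2
  rw [Real.dist_eq, Real.coe_nnabs, dist_eq_norm, norm_sub_rev]
  calc |F x z - F y z| = |F y z - F x z| := abs_sub_comm _ _
    _ ≤ B z * ‖y - x‖ := hle
    _ ≤ |B z| * ‖y - x‖ := mul_le_mul_of_nonneg_right (le_abs_self _) (norm_nonneg _)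

/-- **Pathwise KL-gradient identity (with parameter-score term).**
If `q θ` is a jointly `C¹` family of strictly positive probability densities on `ℝ^d`,
where `q θ` is a density of the pushforward of `μ` under the generator `g θ`, and `p` is a
strictly positive `C¹` probability density, then under finiteness of KL near `θ₀` and
uniform integrable domination of the `θ`-derivatives of the pathwise integrands,
`θ ↦ KL(q θ ‖ p)` is differentiable at `θ₀` with gradient
`∫ [∇_θ log q(θ, x)|_{θ₀, x=g(θ₀,z)} + (∇_x log q θ₀ − ∇_x log p)(g(θ₀,z))ᵀ ∘ ∇_θ g(θ₀,z)] dμ(z)`. -/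
theorem pathwise_KL_gradient_with_parameter_score
    {m n d : ℕ}
    (μ : Measure (EuclideanSpace ℝ (Fin n))) [IsProbabilityMeasure μ]
    (U : Set (EuclideanSpace ℝ (Fin m))) (hU : IsOpen U)
    (θ₀ : EuclideanSpace ℝ (Fin m)) (hθ₀ : θ₀ ∈ U)
    (g : EuclideanSpace ℝ (Fin m) → EuclideanSpace ℝ (Fin n) → EuclideanSpace ℝ (Fin d))
    (g' : EuclideanSpace ℝ (Fin m) → EuclideanSpace ℝ (Fin n) →
      (EuclideanSpace ℝ (Fin m) →L[ℝ] EuclideanSpace ℝ (Fin d)))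
    (hg_meas : ∀ θ ∈ U, Measurable (g θ))
    (hg_diff : ∀ᵐ z ∂μ, ∀ θ ∈ U, HasFDerivAt (fun θ' => g θ' z) (g' θ z) θ)
    (q : EuclideanSpace ℝ (Fin m) → EuclideanSpace ℝ (Fin d) → ℝ)
    (hq_pos : ∀ θ x, 0 < q θ x)
    (hq_C1 : ContDiff ℝ 1 (fun pr : EuclideanSpace ℝ (Fin m) × EuclideanSpace ℝ (Fin d) =>
      q pr.1 pr.2))
    (hq_prob : ∀ θ ∈ U, ∫ x, q θ x = 1)
    -- `q θ` is a density of the pushforward of `μ` under `g θ`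
    (hq_pushforward : ∀ θ ∈ U, ∀ h : EuclideanSpace ℝ (Fin d) → ℝ, Measurable h →
      (∃ C, ∀ x, |h x| ≤ C) → ∫ z, h (g θ z) ∂μ = ∫ x, h x * q θ x)
    (p : EuclideanSpace ℝ (Fin d) → ℝ)
    (hp_pos : ∀ x, 0 < p x)
    (hp_C1 : ContDiff ℝ 1 p)
    (hp_prob : ∫ x, p x = 1)
    -- KL(q θ ‖ p) is finite for θ in a neighborhood of θ₀
    (hKL_fin : ∃ V ∈ nhds θ₀, ∀ θ ∈ V,
      Integrable (fun x => q θ x * Real.log (q θ x / p x)))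
    -- dominated θ-derivatives of the pathwise integrands, uniformly near θ₀
    (h_dom : ∃ V ∈ nhds θ₀, V ⊆ U ∧ ∃ B : EuclideanSpace ℝ (Fin n) → ℝ,
      Integrable B μ ∧ ∀ θ ∈ V, ∀ᵐ z ∂μ,
        ‖fderiv ℝ (fun θ' => Real.log (q θ' (g θ' z)) - Real.log (p (g θ' z))) θ‖ ≤ B z) :
    HasFDerivAt (fun θ => ∫ x, q θ x * Real.log (q θ x / p x))
      (∫ z,
        (fderiv ℝ (fun θ => Real.log (q θ (g θ₀ z))) θ₀
          + (fderiv ℝ (fun x => Real.log (q θ₀ x)) (g θ₀ z)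
              - fderiv ℝ (fun x => Real.log (p x)) (g θ₀ z)).comp (g' θ₀ z)) ∂μ)
      θ₀ := by
  classical
  obtain ⟨V₁, hV₁n, hKL⟩ := hKL_fin
  obtain ⟨V₂, hV₂n, hV₂U, B, hBint, hBdom⟩ := h_dom
  -- a closed ball inside all the neighborhoods
  obtain ⟨ε, hε, hcb⟩ : ∃ ε > 0, Metric.closedBall θ₀ ε ⊆ V₁ ∩ V₂ ∩ U := by
    have hmem : V₁ ∩ V₂ ∩ U ∈ nhds θ₀ :=
      Filter.inter_mem (Filter.inter_mem hV₁n hV₂n) (hU.mem_nhds hθ₀)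
    rcases Metric.nhds_basis_closedBall.mem_iff.1 hmem with ⟨ε, hε, h⟩
    exact ⟨ε, hε, h⟩
  set r : ℝ := ε / 10 with hrdef
  have hr : 0 < r := by positivity
  have hball_cb : Metric.ball θ₀ r ⊆ Metric.closedBall θ₀ ε := by
    intro θ hθ
    rw [Metric.mem_ball] at hθ
    rw [Metric.mem_closedBall]
    nlinarith [hθ]
  have hballU : Metric.ball θ₀ r ⊆ U := fun θ hθ => (hcb (hball_cb hθ)).2
  have hballV₁ : Metric.ball θ₀ r ⊆ V₁ := fun θ hθ => (hcb (hball_cb hθ)).1.1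
  -- the exceptional set for g-differentiability
  set Nset : Set (EuclideanSpace ℝ (Fin n)) :=
    toMeasurable μ {z | ¬ ∀ θ ∈ U, HasFDerivAt (fun θ' => g θ' z) (g' θ z) θ} with hNdef
  have hNmeas : MeasurableSet Nset := measurableSet_toMeasurable _ _
  have hNnull : μ Nset = 0 := by
    rw [hNdef, measure_toMeasurable]
    exact ae_iff.1 hg_diff
  have hNae : ∀ᵐ z ∂μ, z ∉ Nset := by
    rw [ae_iff]
    simpa using hNnull
  have hgood : ∀ z ∉ Nset, ∀ θ ∈ U, HasFDerivAt (fun θ' => g θ' z) (g' θ z) θ := by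
    intro z hz
    by_contra hc
    exact hz (subset_toMeasurable _ _ hc)
  -- joint log-density difference
  set φ : EuclideanSpace ℝ (Fin m) × EuclideanSpace ℝ (Fin d) → ℝ :=
    fun pr => Real.log (q pr.1 pr.2) - Real.log (p pr.2) with hφdef
  have hq_diff : Differentiable ℝ (fun pr : EuclideanSpace ℝ (Fin m) × EuclideanSpace ℝ (Fin d) => q pr.1 pr.2) :=
    hq_C1.differentiable one_ne_zero
  have hφdiff : Differentiable ℝ φ := by
    apply Differentiable.sub
    · exact hq_diff.log (fun pr => (hq_pos _ _).ne')
    · exact (((hp_C1.differentiable one_ne_zero).comp differentiable_snd).log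
        (fun pr => (hp_pos _).ne'))
  have hφcont : Continuous φ := hφdiff.continuous
  -- the pathwise integrand, and its modification
  set F : EuclideanSpace ℝ (Fin m) → EuclideanSpace ℝ (Fin n) → ℝ :=
    fun θ z => Real.log (q θ (g θ z)) - Real.log (p (g θ z)) with hFdef
  set Ft : EuclideanSpace ℝ (Fin m) → EuclideanSpace ℝ (Fin n) → ℝ :=
    fun θ z => if z ∈ Nset then φ (θ, 0) else F θ z with hFtdef
  have hFt_eqF : ∀ z ∉ Nset, (fun θ => Ft θ z) = (fun θ => F θ z) := by
    intro z hz
    funext θ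
    simp only [hFtdef, if_neg hz]
  -- differentiability of F and Ft in θ
  have hFdiff_good : ∀ z ∉ Nset, ∀ θ ∈ U, HasFDerivAt (fun θ' => F θ' z)
      ((fderiv ℝ φ (θ, g θ z)).comp ((ContinuousLinearMap.id ℝ _).prod (g' θ z))) θ := by
    intro z hz θ hθ
    have h1 : HasFDerivAt (fun θ' => (θ', g θ' z))
        ((ContinuousLinearMap.id ℝ (EuclideanSpace ℝ (Fin m))).prod (g' θ z)) θ :=
      (hasFDerivAt_id θ).prodMk (hgood z hz θ hθ)
    have h2 : HasFDerivAt φ (fderiv ℝ φ (θ, g θ z)) (θ, g θ z) :=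
      (hφdiff _).hasFDerivAt
    exact h2.comp θ h1
  have hFtdiff : ∀ z, ∀ θ ∈ U, DifferentiableAt ℝ (fun θ' => Ft θ' z) θ := by
    intro z θ hθ
    by_cases hz : z ∈ Nset
    · have : (fun θ' => Ft θ' z) = fun θ' => φ (θ', 0) := by
        funext θ'; simp only [hFtdef, if_pos hz]
      rw [this]
      exact DifferentiableAt.comp θ (hφdiff _) (differentiableAt_id.prodMk (differentiableAt_const 0))
    · rw [hFt_eqF z hz]
      exact (hFdiff_good z hz θ hθ).differentiableAt
  -- measurability of Ft and F in z
  have hFmeas : ∀ θ ∈ U, Measurable (fun z => F θ z) := by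
    intro θ hθ
    have : (fun z => F θ z) = (fun x => φ (θ, x)) ∘ (g θ) := rfl
    rw [this]
    exact (hφcont.comp (Continuous.prodMk_right θ)).measurable.comp (hg_meas θ hθ)
  have hFtmeas : ∀ θ ∈ U, Measurable (fun z => Ft θ z) := by
    intro θ hθ
    exact Measurable.ite hNmeas measurable_const (hFmeas θ hθ)
  -- the dominated-derivative bound transfers to Ft
  have hBdomFt : ∀ θ ∈ Metric.closedBall θ₀ ε, ∀ᵐ z ∂μ,
      ‖fderiv ℝ (fun θ' => Ft θ' z) θ‖ ≤ B z := by
    intro θ hθ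
    filter_upwards [hBdom θ (hcb hθ).1.2, hNae] with z h1 h2
    rw [hFt_eqF z h2]
    simp only [hFdef]
    exact h1
  -- a.e. Lipschitz property of F on the ball
  have hlipF : ∀ᵐ z ∂μ, LipschitzOnWith (Real.nnabs (B z)) (fun θ => F θ z)
      (Metric.ball θ₀ r) := by
    have hVU' : Metric.closedBall θ₀ ε ⊆ U := fun θ hθ => (hcb hθ).2
    have := lip_of_dom μ U (Metric.closedBall θ₀ ε) hVU' Ft B
      hBint.aestronglyMeasurable hFtdiff hFtmeas hBdomFt θ₀ r hr
      (fun θ hθ => by rwa [Metric.mem_closedBall, ← show 10 * r = ε by rw [hrdef]; ring] )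
    filter_upwards [this, hNae] with z h1 h2
    rwa [← hFt_eqF z h2]
  -- representation of the KL divergence via the pushforward
  have hrep : ∀ θ ∈ Metric.ball θ₀ r,
      Integrable (fun z => F θ z) μ ∧
        ∫ z, F θ z ∂μ = ∫ x, q θ x * Real.log (q θ x / p x) := by
    intro θ hθ
    have hint : Integrable (fun x => φ (θ, x) * q θ x) := by
      have heq : (fun x => φ (θ, x) * q θ x) = fun x => q θ x * Real.log (q θ x / p x) := by
        funext x
        rw [Real.log_div (hq_pos θ x).ne' (hp_pos x).ne']
        simp only [hφdef]
        ring
      rw [heq]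
      exact hKL θ (hballV₁ hθ)
    have := repKL_aux μ (g θ) (hg_meas θ (hballU hθ)) (fun x => φ (θ, x))
      (hφcont.comp (Continuous.prodMk_right θ)) (q θ) (fun x => (hq_pos θ x).le)
      (hq_C1.continuous.comp (Continuous.prodMk_right θ)) (hq_pushforward θ (hballU hθ)) hint
    refine ⟨this.1, ?_⟩
    rw [this.2]
    congr 1
    funext x
    rw [Real.log_div (hq_pos θ x).ne' (hp_pos x).ne']
    simp only [hφdef]
    ring
  -- differentiability of F at θ₀ (a.e.) and measurability of its derivative
  have hFdiff_ae : ∀ᵐ z ∂μ, DifferentiableAt ℝ (fun θ => F θ z) θ₀ := by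
    filter_upwards [hNae] with z hz
    exact (hFdiff_good z hz θ₀ hθ₀).differentiableAt
  have hF'meas : AEStronglyMeasurable (fun z => fderiv ℝ (fun θ => F θ z) θ₀) μ :=
    aestronglyMeasurable_fderiv_param μ F θ₀ r hr
      (fun θ hθ => (hFmeas θ (hballU hθ)).aestronglyMeasurable) hFdiff_ae
  have hF_meas_ev : ∀ᶠ θ in nhds θ₀, AEStronglyMeasurable (F θ) μ := by
    filter_upwards [hU.mem_nhds hθ₀] with θ hθ
    exact (hFmeas θ hθ).aestronglyMeasurable
  have hF_int : Integrable (F θ₀) μ := (hrep θ₀ (Metric.mem_ball_self hr)).1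
  have h_diff : ∀ᵐ z ∂μ, HasFDerivAt (fun θ => F θ z)
      (fderiv ℝ (fun θ => F θ z) θ₀) θ₀ := by
    filter_upwards [hFdiff_ae] with z hz
    exact hz.hasFDerivAt
  obtain ⟨hF'int, hHasF⟩ := hasFDerivAt_integral_of_dominated_loc_of_lip (Metric.ball_mem_nhds θ₀ hr) hF_meas_ev
    hF_int hF'meas hlipF hBint h_diff
  -- identify the derivative with the claimed integrand
  have hAeq : ∀ᵐ z ∂μ,
      (fderiv ℝ (fun θ => Real.log (q θ (g θ₀ z))) θ₀
        + (fderiv ℝ (fun x => Real.log (q θ₀ x)) (g θ₀ z)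
            - fderiv ℝ (fun x => Real.log (p x)) (g θ₀ z)).comp (g' θ₀ z))
      = fderiv ℝ (fun θ => F θ z) θ₀ := by
    filter_upwards [hNae] with z hz
    set x₀ := g θ₀ z with hx₀
    set Lq : EuclideanSpace ℝ (Fin m) × EuclideanSpace ℝ (Fin d) → ℝ :=
      fun pr => Real.log (q pr.1 pr.2) with hLqdef
    have hLqdiff : Differentiable ℝ Lq := hq_diff.log (fun pr => (hq_pos _ _).ne')
    set DLq := fderiv ℝ Lq (θ₀, x₀) with hDLq
    have hgd : HasFDerivAt (fun θ' => g θ' z) (g' θ₀ z) θ₀ := hgood z hz θ₀ hθ₀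
    have hθpart : HasFDerivAt (fun θ => Real.log (q θ x₀))
        (DLq.comp (ContinuousLinearMap.inl ℝ _ _)) θ₀ :=
      (hLqdiff _).hasFDerivAt.comp θ₀ (hasFDerivAt_prodMk_left θ₀ x₀)
    have hxpart : HasFDerivAt (fun x => Real.log (q θ₀ x))
        (DLq.comp (ContinuousLinearMap.inr ℝ _ _)) x₀ :=
      (hLqdiff _).hasFDerivAt.comp x₀ (hasFDerivAt_prodMk_right θ₀ x₀)
    have hlogp : Differentiable ℝ (fun x => Real.log (p x)) :=
      (hp_C1.differentiable one_ne_zero).log (fun x => (hp_pos x).ne')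
    have hppart : HasFDerivAt (fun x => Real.log (p x))
        (fderiv ℝ (fun x => Real.log (p x)) x₀) x₀ := (hlogp x₀).hasFDerivAt
    have hqcomp : HasFDerivAt (fun θ => Real.log (q θ (g θ z)))
        (DLq.comp ((ContinuousLinearMap.id ℝ (EuclideanSpace ℝ (Fin m))).prod (g' θ₀ z))) θ₀ :=
      (hLqdiff _).hasFDerivAt.comp θ₀ ((hasFDerivAt_id θ₀).prodMk hgd)
    have hpcomp : HasFDerivAt (fun θ => Real.log (p (g θ z)))
        ((fderiv ℝ (fun x => Real.log (p x)) x₀).comp (g' θ₀ z)) θ₀ :=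
      HasFDerivAt.comp θ₀ (g := fun x => Real.log (p x)) hppart hgd
    have hFhas : HasFDerivAt (fun θ => F θ z)
        (DLq.comp ((ContinuousLinearMap.id ℝ (EuclideanSpace ℝ (Fin m))).prod (g' θ₀ z))
          - (fderiv ℝ (fun x => Real.log (p x)) x₀).comp (g' θ₀ z)) θ₀ := by
      exact hqcomp.sub hpcomp
    have hsplit : DLq.comp ((ContinuousLinearMap.id ℝ (EuclideanSpace ℝ (Fin m))).prod (g' θ₀ z))
        = DLq.comp (ContinuousLinearMap.inl ℝ _ _)
          + (DLq.comp (ContinuousLinearMap.inr ℝ _ _)).comp (g' θ₀ z) := by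
      apply ContinuousLinearMap.ext
      intro v
      simp only [ContinuousLinearMap.comp_apply, ContinuousLinearMap.prod_apply,
        ContinuousLinearMap.id_apply, ContinuousLinearMap.inl_apply,
        ContinuousLinearMap.inr_apply, ContinuousLinearMap.add_apply]
      rw [← map_add]
      congr 1
      rw [Prod.mk_add_mk, add_zero, zero_add]
    rw [hθpart.fderiv, hxpart.fderiv, hFhas.fderiv, hsplit, ContinuousLinearMap.sub_comp]
    abel
  have hIeq : (∫ z,
      (fderiv ℝ (fun θ => Real.log (q θ (g θ₀ z))) θ₀
        + (fderiv ℝ (fun x => Real.log (q θ₀ x)) (g θ₀ z)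
            - fderiv ℝ (fun x => Real.log (p x)) (g θ₀ z)).comp (g' θ₀ z)) ∂μ)
      = ∫ z, fderiv ℝ (fun θ => F θ z) θ₀ ∂μ := integral_congr_ae hAeq
  rw [hIeq]
  refine hHasF.congr_of_eventuallyEq ?_
  filter_upwards [Metric.ball_mem_nhds θ₀ hr] with θ hθ
  exact ((hrep θ hθ).2).symm
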